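/- arXiv:2210.14638 — 5 statements merged into one kernel-verified Lean document; each statement's English description precedes it below -/
import Mathlib

section
/- Let G be a graph and (A,B) a clique separation of G. Then for every positive integer k, the subgraph of the k-improved graph of G induced on A equals the k-improved graph of G[A]; that is, G^⟨k⟩[A] = (G[A])^⟨k⟩. -/
open Finset

variable {V : Type*} [Fintype V] [DecidableEq V]

/-- A separation of a graph: a pair of vertex sets covering all vertices with no edge
between the two strict sides. Its order is `(A ∩ B).card`. -/
def IsSep (G : SimpleGraph V) (A B : Finset V) : Prop :=
  A ∪ B = Finset.univ ∧
    ∀ a ∈ A, a ∉ B → ∀ b ∈ B, b ∉ A → ¬ G.Adj a b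

/-- The `k`-improved graph `G^⟨k⟩`: `x` and `y` are adjacent iff they are distinct and no
separation of `G` of order at most `k` separates them (i.e. `μ_G(x,y) > k`). -/
def ImprovedGraph (G : SimpleGraph V) (k : ℕ) : SimpleGraph V where
  Adj x y := x ≠ y ∧ ∀ A B : Finset V, IsSep G A B → (A ∩ B).card ≤ k →
    ¬ ((x ∈ A ∧ x ∉ B ∧ y ∈ B ∧ y ∉ A) ∨ (y ∈ A ∧ y ∉ B ∧ x ∈ B ∧ x ∉ A))
  symm := ⟨by
    rintro x y ⟨hxy, h⟩
    exact ⟨hxy.symm, fun A B hs ho hc => h A B hs ho hc.symm⟩⟩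
  loopless := ⟨fun x h => h.1 rfl⟩

/-- `S` is `(q,k)`-unbreakable in `G`: every separation of order at most `k` has at most `q`
vertices of `S` on one of its sides. -/
def UnbreakableSet (G : SimpleGraph V) (S : Finset V) (q k : ℕ) : Prop :=
  ∀ A B : Finset V, IsSep G A B → (A ∩ B).card ≤ k →
    (A ∩ S).card ≤ q ∨ (B ∩ S).card ≤ q

/-- A clique separation: both strict sides nonempty and the separator is a clique. -/
def IsCliqueSep (G : SimpleGraph V) (A B : Finset V) : Prop :=
  IsSep G A B ∧ (A \ B).Nonempty ∧ (B \ A).Nonempty ∧ G.IsClique (↑(A ∩ B) : Set V)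

/-- `y` is reachable from `x` in `G − W`. -/
def AvoidReach (G : SimpleGraph V) (W : Finset V) (x y : V) : Prop :=
  ∃ p : G.Walk x y, ∀ v ∈ p.support, v ∉ W

/-- `W` is an `X`-`Y` separator: no vertex of `Y \ W` is reachable from `X \ W` in `G − W`. -/
def IsSepSet (G : SimpleGraph V) (W X Y : Finset V) : Prop :=
  ∀ x ∈ X, ∀ y ∈ Y, ¬ AvoidReach G W x y

/-- `R_{G−W}(X \ W)`: the set of vertices reachable from `X \ W` in `G − W`. -/
def ReachSet (G : SimpleGraph V) (W X : Finset V) : Set V :=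
  {y | ∃ x ∈ X, AvoidReach G W x y}

/-- An important `X`-`Y` separator. -/
def IsImpSep (G : SimpleGraph V) (X Y W : Finset V) : Prop :=
  IsSepSet G W X Y ∧
  (∀ W' ⊆ W, W' ≠ W → ¬ IsSepSet G W' X Y) ∧
  ∀ W' : Finset V, IsSepSet G W' X Y → W'.card ≤ W.card →
    ¬ (ReachSet G W X ⊂ ReachSet G W' X)

/-- A `k`-important `X`-`Y` separator. -/
def IsKImpSep (G : SimpleGraph V) (k : ℕ) (X Y W : Finset V) : Prop :=
  IsImpSep G X Y W ∧ W.card ≤ k ∧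
  ∀ W' : Finset V, IsImpSep G X Y W' → W'.card ≤ k → W' ≠ W →
    ¬ (ReachSet G W X ⊆ ReachSet G W' X)

/-- The `k`-important separator extension of `D`. -/
def KImpExt (G : SimpleGraph V) (D : Finset V) (k : ℕ) : Set V :=
  {u | (∃ v, v ≠ u ∧ ∃ S : Finset V, IsKImpSep G k {v} D S ∧ u ∈ S) ∨
       (({u} : Finset V).card ≤ k ∧ IsSepSet G {u} {u} D ∧
        ∀ S : Finset V, IsSepSet G S {u} D → S.card ≤ k → S = {u})}

/-- `C` is (the vertex set of) a connected component of `G − A`. -/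
def IsCompAvoiding (G : SimpleGraph V) (A : Set V) (C : Set V) : Prop :=
  ∃ x, x ∉ A ∧ C = {y | ∃ p : G.Walk x y, ∀ v ∈ p.support, v ∉ A}

/-- `C` is (the vertex set of) a connected component of the induced subgraph `G[S]`. -/
def IsCompWithin (G : SimpleGraph V) (S : Set V) (C : Set V) : Prop :=
  ∃ x ∈ S, C = {y | ∃ p : G.Walk x y, ∀ v ∈ p.support, v ∈ S}

/-- The (open) neighborhood of a vertex set `C` in `G`. -/
def nbhdSet (G : SimpleGraph V) (C : Set V) : Set V :=
  {v | v ∉ C ∧ ∃ c ∈ C, G.Adj v c}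

/-- A connectivity-sensitive star decomposition of `G`, given by its central bag and its
set of leaf bags. -/
structure ConnSensStar (G : SimpleGraph V) where
  center : Finset V
  leaves : Finset (Finset V)
  cover : ∀ v : V, v ∈ center ∨ ∃ L ∈ leaves, v ∈ L
  edges : ∀ x y : V, G.Adj x y →
    (x ∈ center ∧ y ∈ center) ∨ ∃ L ∈ leaves, x ∈ L ∧ y ∈ L
  inter : ∀ L ∈ leaves, ∀ L' ∈ leaves, L ≠ L' → ∀ v ∈ L, v ∈ L' → v ∈ center
  adh_distinct : ∀ L ∈ leaves, ∀ L' ∈ leaves, L ∩ center = L' ∩ center → L = L'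
  comp_nbhd : ∀ L ∈ leaves, ∀ C : Set V,
    IsCompWithin G ((↑L : Set V) \ (↑center : Set V)) C → nbhdSet G C = ↑(L ∩ center)

/-- `(A,B)` is an `S`-stable separation of `G`. -/
def IsStableSep (G : SimpleGraph V) (S : Finset V) (A B : Finset V) : Prop :=
  IsSep G A B ∧ ∃ SL SR : Finset V, SL ∪ SR = S ∧ SL ∩ SR = ∅ ∧ SL ⊆ A ∧ SR ⊆ B ∧
    ∀ A' B' : Finset V, IsSep G A' B' → SL ⊆ A' → SR ⊆ B' → (A ∩ B).card ≤ (A' ∩ B').card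

/-- A `Λ`-boundaried graph: a graph together with an injective partial assignment of
labels to (boundary) vertices. -/
structure BGraph (Λ : Type*) (V : Type*) where
  G : SimpleGraph V
  bd : Λ → Option V
  inj : ∀ l l' v, bd l = some v → bd l' = some v → l = l'

/-- `K` (with embeddings `f₁`, `f₂`) is the gluing `H₁ ⊕ H₂` of two boundaried graphs:
vertices of equal label are identified, and an edge is present iff it is present in
(at least) one of the two graphs. -/
def IsGluing {Λ V₁ V₂ W : Type*} (H₁ : BGraph Λ V₁) (H₂ : BGraph Λ V₂)
    (K : SimpleGraph W) (f₁ : V₁ → W) (f₂ : V₂ → W) : Prop :=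
  Function.Injective f₁ ∧ Function.Injective f₂ ∧
  (∀ w : W, (∃ a, f₁ a = w) ∨ (∃ b, f₂ b = w)) ∧
  (∀ a b, f₁ a = f₂ b ↔ ∃ l, H₁.bd l = some a ∧ H₂.bd l = some b) ∧
  (∀ x y : W, K.Adj x y ↔
    (∃ a b, f₁ a = x ∧ f₁ b = y ∧ H₁.G.Adj a b) ∨
    (∃ a b, f₂ a = x ∧ f₂ b = y ∧ H₂.G.Adj a b))

/-- The weak cut signature value of the boundaried graph `H` at `(A', B')` is at most
`n − |A' ∩ B'|`: there is a separation of order at most `n` whose sides contain the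
boundary vertices labeled by `A'` and `B'`, respectively. -/
def WeakSigLE {Λ : Type*} {V : Type*} [Fintype V] [DecidableEq V]
    (H : BGraph Λ V) (A' B' : Finset Λ) (n : ℕ) : Prop :=
  ∃ A B : Finset V, IsSep H.G A B ∧
    (∀ l ∈ A', ∀ v, H.bd l = some v → v ∈ A) ∧
    (∀ l ∈ B', ∀ v, H.bd l = some v → v ∈ B) ∧ (A ∩ B).card ≤ n

/-- Two `Λ`-boundaried graphs have the same weak cut signature. -/
def SameWeakSig {Λ : Type*} [Fintype Λ] [DecidableEq Λ] {V₁ V₂ : Type*}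
    [Fintype V₁] [DecidableEq V₁] [Fintype V₂] [DecidableEq V₂]
    (H₁ : BGraph Λ V₁) (H₂ : BGraph Λ V₂) : Prop :=
  ∀ A' B' : Finset Λ, A' ∪ B' = Finset.univ →
    ∀ n : ℕ, WeakSigLE H₁ A' B' n ↔ WeakSigLE H₂ A' B' n

lemma isSep_symm {G : SimpleGraph V} {A B : Finset V} (h : IsSep G A B) : IsSep G B A :=
  ⟨by rw [Finset.union_comm]; exact h.1,
   fun a ha haB b hb hbA hadj => h.2 b hb hbA a ha haB hadj.symm⟩

/-- Lifting a separation of `G[A]` to a separation of `G`, assuming the clique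
separator `A ∩ B` lies (as subtype elements) inside `B'`. -/
lemma lift_sep (G : SimpleGraph V) (A B : Finset V) (h : IsCliqueSep G A B)
    (A' B' : Finset ↥(↑A : Set V)) (hsep : IsSep (G.induce (↑A : Set V)) A' B')
    (hcl : ∀ c : ↥(↑A : Set V), (c : V) ∈ B → c ∈ B') :
    ∃ X Y : Finset V, IsSep G X Y ∧ (X ∩ Y).card = (A' ∩ B').card ∧
      (∀ a : ↥(↑A : Set V), a ∈ A' → (a : V) ∈ X) ∧
      (∀ a : ↥(↑A : Set V), a ∉ B' → (a : V) ∉ Y) ∧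
      (∀ a : ↥(↑A : Set V), a ∈ B' → (a : V) ∈ Y) ∧
      (∀ a : ↥(↑A : Set V), a ∉ A' → (a : V) ∉ X) := by
  classical
  obtain ⟨hGsep, -, -, hclique⟩ := h
  set X : Finset V := A'.image Subtype.val with hX
  set Y : Finset V := B'.image Subtype.val ∪ (Finset.univ \ A) with hY
  have hinj : Function.Injective (Subtype.val : ↥(↑A : Set V) → V) := Subtype.val_injective
  have hXA : ∀ v ∈ X, v ∈ A := by
    intro v hv
    obtain ⟨a, -, rfl⟩ := Finset.mem_image.mp hv
    exact a.2
  have hmemX : ∀ a : ↥(↑A : Set V), (a : V) ∈ X ↔ a ∈ A' := by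
    intro a
    constructor
    · intro hv
      obtain ⟨b, hb, hba⟩ := Finset.mem_image.mp hv
      rwa [hinj hba] at hb
    · intro hv; exact Finset.mem_image.mpr ⟨a, hv, rfl⟩
  have hmemY : ∀ a : ↥(↑A : Set V), (a : V) ∈ Y ↔ a ∈ B' := by
    intro a
    constructor
    · intro hv
      rcases Finset.mem_union.mp hv with hv | hv
      · obtain ⟨b, hb, hba⟩ := Finset.mem_image.mp hv
        rwa [hinj hba] at hb
      · exact absurd a.2 (by simpa using (Finset.mem_sdiff.mp hv).2)
    · intro hv; exact Finset.mem_union.mpr (Or.inl (Finset.mem_image.mpr ⟨a, hv, rfl⟩))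
  have hcover : ∀ a : ↥(↑A : Set V), a ∈ A' ∪ B' := by
    intro a; rw [hsep.1]; exact Finset.mem_univ a
  refine ⟨X, Y, ⟨?_, ?_⟩, ?_, ?_, ?_, ?_, ?_⟩
  · -- union is univ
    apply Finset.eq_univ_iff_forall.mpr
    intro v
    by_cases hvA : v ∈ A
    · have ha : (⟨v, by simpa using hvA⟩ : ↥(↑A : Set V)) ∈ A' ∪ B' := hcover _
      rcases Finset.mem_union.mp ha with ha | ha
      · exact Finset.mem_union.mpr (Or.inl ((hmemX ⟨v, by simpa using hvA⟩).mpr ha))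
      · exact Finset.mem_union.mpr (Or.inr ((hmemY ⟨v, by simpa using hvA⟩).mpr ha))
    · exact Finset.mem_union.mpr (Or.inr (Finset.mem_union.mpr
        (Or.inr (Finset.mem_sdiff.mpr ⟨Finset.mem_univ v, hvA⟩))))
  · -- no edges across
    intro a ha haY b hb hbX hadj
    have haA : a ∈ A := hXA a ha
    set a' : ↥(↑A : Set V) := ⟨a, by simpa using haA⟩ with ha'
    have ha'A : a' ∈ A' := (hmemX a').mp ha
    have ha'B : a' ∉ B' := fun hc => haY ((hmemY a').mpr hc)
    rcases Finset.mem_union.mp hb with hb' | hb'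
    · -- b is in the image of B'
      obtain ⟨b', hb'B, rfl⟩ := Finset.mem_image.mp hb'
      have hb'A : b' ∉ A' := fun hc => hbX ((hmemX b').mpr hc)
      exact hsep.2 a' ha'A ha'B b' hb'B hb'A hadj
    · -- b is outside A
      have hbA : b ∉ A := by simpa using (Finset.mem_sdiff.mp hb').2
      have hbB : b ∈ B := by
        have := Finset.eq_univ_iff_forall.mp hGsep.1 b
        rcases Finset.mem_union.mp this with h1 | h1
        · exact absurd h1 hbA
        · exact h1
      have haB : a ∉ B := by
        intro haB
        exact ha'B (hcl a' haB)
      exact hGsep.2 a haA haB b hbB hbA hadj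
  · -- card
    have : X ∩ Y = (A' ∩ B').image Subtype.val := by
      ext v
      simp only [Finset.mem_inter, Finset.mem_image]
      constructor
      · rintro ⟨hvX, hvY⟩
        obtain ⟨a, haA', rfl⟩ := Finset.mem_image.mp hvX
        exact ⟨a, ⟨haA', (hmemY a).mp hvY⟩, rfl⟩
      · rintro ⟨a, ha, rfl⟩
        obtain ⟨h1, h2⟩ := ha
        exact ⟨(hmemX a).mpr h1, (hmemY a).mpr h2⟩
    rw [this, Finset.card_image_of_injective _ hinj]
  · intro a ha; exact (hmemX a).mpr ha
  · intro a ha hc; exact ha ((hmemY a).mp hc)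
  · intro a ha; exact (hmemY a).mpr ha
  · intro a ha hc; exact ha ((hmemX a).mp hc)

/-- if `(A,B)` is a clique separation of `G`, then for every positive
integer `k` the subgraph of the `k`-improved graph of `G` induced on `A` equals the
`k`-improved graph of `G[A]`. -/
theorem improved_graph_induce_on_clique_sep_side (G : SimpleGraph V) (A B : Finset V)
    (k : ℕ) (hk : 0 < k) (h : IsCliqueSep G A B) :
    (ImprovedGraph G k).induce (↑A : Set V) =
      ImprovedGraph (G.induce (↑A : Set V)) k := by
  classical
  obtain ⟨hGsep, hAB, hBA, hclique⟩ := h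
  ext x y
  show (ImprovedGraph G k).Adj (x : V) (y : V) ↔ (ImprovedGraph (G.induce (↑A : Set V)) k).Adj x y
  constructor
  · rintro ⟨hne, hsep⟩
    refine ⟨fun hc => hne (congrArg Subtype.val hc), ?_⟩
    intro A' B' hs ho hviol
    have hdich : (∀ c : ↥(↑A : Set V), (c : V) ∈ B → c ∈ B') ∨
        (∀ c : ↥(↑A : Set V), (c : V) ∈ B → c ∈ A') := by
      by_contra hcon
      push_neg at hcon
      obtain ⟨⟨c, hcB, hcB'⟩, ⟨c', hc'B, hc'A'⟩⟩ := hcon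
      have hcov : ∀ a : ↥(↑A : Set V), a ∈ A' ∪ B' := by
        intro a; rw [hs.1]; exact Finset.mem_univ a
      have hcA' : c ∈ A' := by
        rcases Finset.mem_union.mp (hcov c) with h1 | h1
        · exact h1
        · exact absurd h1 hcB'
      have hc'B' : c' ∈ B' := by
        rcases Finset.mem_union.mp (hcov c') with h1 | h1
        · exact absurd h1 hc'A'
        · exact h1
      have hne' : c ≠ c' := by rintro rfl; exact hcB' hc'B'
      have hvne : (c : V) ≠ (c' : V) := fun hh => hne' (Subtype.ext hh)
      have hadj : G.Adj (c : V) (c' : V) := by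
        refine hclique ?_ ?_ hvne
        · exact Finset.mem_coe.mpr (Finset.mem_inter.mpr ⟨by exact_mod_cast c.2, hcB⟩)
        · exact Finset.mem_coe.mpr (Finset.mem_inter.mpr ⟨by exact_mod_cast c'.2, hc'B⟩)
      exact hs.2 c hcA' hcB' c' hc'B' hc'A' hadj
    rcases hdich with hd | hd
    · obtain ⟨X, Y, hXY, hcard, h1, h2, h3, h4⟩ :=
        lift_sep G A B ⟨hGsep, hAB, hBA, hclique⟩ A' B' hs hd
      refine hsep X Y hXY (by rw [hcard]; exact ho) ?_
      rcases hviol with ⟨v1, v2, v3, v4⟩ | ⟨v1, v2, v3, v4⟩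
      · exact Or.inl ⟨h1 x v1, h2 x v2, h3 y v3, h4 y v4⟩
      · exact Or.inr ⟨h1 y v1, h2 y v2, h3 x v3, h4 x v4⟩
    · obtain ⟨X, Y, hXY, hcard, h1, h2, h3, h4⟩ :=
        lift_sep G A B ⟨hGsep, hAB, hBA, hclique⟩ B' A' (isSep_symm hs) hd
      refine hsep X Y hXY (by rw [hcard, Finset.inter_comm]; exact ho) ?_
      rcases hviol with ⟨v1, v2, v3, v4⟩ | ⟨v1, v2, v3, v4⟩
      · exact Or.inr ⟨h1 y v3, h2 y v4, h3 x v1, h4 x v2⟩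
      · exact Or.inl ⟨h1 x v3, h2 x v4, h3 y v1, h4 y v2⟩
  · rintro ⟨hne, hsep⟩
    refine ⟨fun hc => hne (Subtype.ext hc), ?_⟩
    intro X Y hXY ho hviol
    set A' : Finset ↥(↑A : Set V) := Finset.univ.filter (fun a => (a : V) ∈ X) with hA'
    set B' : Finset ↥(↑A : Set V) := Finset.univ.filter (fun a => (a : V) ∈ Y) with hB'
    have hmemA' : ∀ a : ↥(↑A : Set V), a ∈ A' ↔ (a : V) ∈ X := by
      intro a; simp [hA']
    have hmemB' : ∀ a : ↥(↑A : Set V), a ∈ B' ↔ (a : V) ∈ Y := by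
      intro a; simp [hB']
    have hs : IsSep (G.induce (↑A : Set V)) A' B' := by
      constructor
      · apply Finset.eq_univ_iff_forall.mpr
        intro a
        rcases Finset.mem_union.mp (Finset.eq_univ_iff_forall.mp hXY.1 (a : V)) with h1 | h1
        · exact Finset.mem_union.mpr (Or.inl ((hmemA' a).mpr h1))
        · exact Finset.mem_union.mpr (Or.inr ((hmemB' a).mpr h1))
      · intro a ha haB b hb hbA hadj
        exact hXY.2 (a : V) ((hmemA' a).mp ha) (fun hc => haB ((hmemB' a).mpr hc))
          (b : V) ((hmemB' b).mp hb) (fun hc => hbA ((hmemA' b).mpr hc)) hadj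
    have hcard : (A' ∩ B').card ≤ k := by
      refine le_trans (Finset.card_le_card_of_injOn Subtype.val ?_ ?_) ho
      · intro a ha
        obtain ⟨h1, h2⟩ := Finset.mem_inter.mp ha
        exact Finset.mem_inter.mpr ⟨(hmemA' a).mp h1, (hmemB' a).mp h2⟩
      · exact fun a _ b _ hab => Subtype.ext hab
    refine hsep A' B' hs hcard ?_
    rcases hviol with ⟨v1, v2, v3, v4⟩ | ⟨v1, v2, v3, v4⟩
    · exact Or.inl ⟨(hmemA' x).mpr v1, fun hc => v2 ((hmemB' x).mp hc),
        (hmemB' y).mpr v3, fun hc => v4 ((hmemA' y).mp hc)⟩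
    · exact Or.inr ⟨(hmemA' y).mpr v1, fun hc => v2 ((hmemB' y).mp hc),
        (hmemB' x).mpr v3, fun hc => v4 ((hmemA' x).mp hc)⟩
end

section
/- Let G be a graph, S ⊆ V(G) an important {v}-D separator of size at most k that is a k-important {v}-D separator distinct from {v}, and suppose u is reachable from v in G − S. Then S is a k-important {u}-D separator. -/
open Finset

variable {V : Type*} [Fintype V] [DecidableEq V]

lemma avoidReach_symm {G : SimpleGraph V} {W : Finset V} {x y : V}
    (h : AvoidReach G W x y) : AvoidReach G W y x := by
  obtain ⟨p, hp⟩ := h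
  exact ⟨p.reverse, fun v hv => hp v (by simpa [SimpleGraph.Walk.support_reverse] using hv)⟩

lemma avoidReach_trans {G : SimpleGraph V} {W : Finset V} {x y z : V}
    (h1 : AvoidReach G W x y) (h2 : AvoidReach G W y z) : AvoidReach G W x z := by
  obtain ⟨p, hp⟩ := h1; obtain ⟨q, hq⟩ := h2
  refine ⟨p.append q, fun v hv => ?_⟩
  rw [SimpleGraph.Walk.mem_support_append_iff] at hv
  exact hv.elim (hp v) (hq v)

lemma avoidReach_mono {G : SimpleGraph V} {W W' : Finset V} (hW : W' ⊆ W) {x y : V}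
    (h : AvoidReach G W x y) : AvoidReach G W' x y := by
  obtain ⟨p, hp⟩ := h
  exact ⟨p, fun v hv hv' => hp v hv (hW hv')⟩

lemma mem_reachSet_singleton {G : SimpleGraph V} {W : Finset V} {a y : V} :
    y ∈ ReachSet G W {a} ↔ AvoidReach G W a y := by
  simp [ReachSet]

lemma reachSet_singleton_eq {G : SimpleGraph V} {W : Finset V} {a b : V}
    (h : AvoidReach G W a b) : ReachSet G W {a} = ReachSet G W {b} := by
  ext y
  simp only [mem_reachSet_singleton]
  exact ⟨fun hy => avoidReach_trans (avoidReach_symm h) hy, fun hy => avoidReach_trans h hy⟩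

lemma isSepSet_transfer {G : SimpleGraph V} {W D : Finset V} {a b : V}
    (h : AvoidReach G W a b) (hs : IsSepSet G W {b} D) : IsSepSet G W {a} D := by
  intro x hx y hy hr
  rw [Finset.mem_singleton] at hx
  subst hx
  exact hs b (Finset.mem_singleton_self b) y hy (avoidReach_trans (avoidReach_symm h) hr)

lemma isImpSep_transfer {G : SimpleGraph V} {W D : Finset V} {a b : V}
    (h : AvoidReach G W a b) (hi : IsImpSep G {b} D W) : IsImpSep G {a} D W := by
  obtain ⟨hsep, hmin, himp⟩ := hi
  refine ⟨isSepSet_transfer h hsep, ?_, ?_⟩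
  · intro W' hW' hne hs
    exact hmin W' hW' hne
      (isSepSet_transfer (avoidReach_symm (avoidReach_mono hW' h)) hs)
  · intro W' hs hcard hss
    have hb : AvoidReach G W' a b := by
      have : b ∈ ReachSet G W {a} :=
        mem_reachSet_singleton.mpr (avoidReach_symm (avoidReach_symm h))
      exact mem_reachSet_singleton.mp (hss.1 this)
    refine himp W' (isSepSet_transfer (avoidReach_symm hb) hs) hcard ?_
    rwa [← reachSet_singleton_eq h, ← reachSet_singleton_eq hb]

/-- if `S` is a `k`-important `{v}`-`D` separator distinct from `{v}` and
`u` is reachable from `v` in `G − S`, then `S` is a `k`-important `{u}`-`D` separator. -/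
theorem kImpSep_basis_change (G : SimpleGraph V) (k : ℕ) (D S : Finset V) (v u : V)
    (hS : IsKImpSep G k {v} D S) (hne : S ≠ {v}) (hu : AvoidReach G S v u) :
    IsKImpSep G k {u} D S := by
  obtain ⟨himp, hcard, hbest⟩ := hS
  refine ⟨isImpSep_transfer (avoidReach_symm hu) himp, hcard, ?_⟩
  intro W' hW' hWk hWne hss
  have hv : v ∈ ReachSet G S {u} :=
    mem_reachSet_singleton.mpr (avoidReach_symm hu)
  have huv : AvoidReach G W' u v := mem_reachSet_singleton.mp (hss hv)
  refine hbest W' (isImpSep_transfer (avoidReach_symm huv) hW') hWk hWne ?_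
  rw [reachSet_singleton_eq hu, reachSet_singleton_eq (avoidReach_symm huv)]
  exact hss
end

section
/- Let G be a graph, k an integer, and q : [k] → ℕ, q' : ℕ → ℕ non-decreasing. Suppose G has a connectivity-sensitive star decomposition (T, χ) with central bag b such that χ(b) is q-unbreakable in G and, for every leaf ℓ of T, the set χ(ℓ) is q'-unbreakability-tied to σ(ℓ) := χ(ℓ) ∩ χ(b). Then the whole vertex set V(G) is q*-unbreakable, where q*(i) = q(i) + (2^{q(i)} + i) · q'(q(i) + i) for i ∈ [k]. -/
open Finset

variable {V : Type*} [Fintype V] [DecidableEq V]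

lemma aux_star_side (G : SimpleGraph V) (q q' : ℕ → ℕ) (hq' : Monotone q')
    (T : ConnSensStar G) (A B : Finset V) (hsep : IsSep G A B)
    (hAc : (A ∩ T.center).card ≤ q (A ∩ B).card)
    (hleaf : ∀ L ∈ T.leaves, ∀ A B : Finset V, IsSep G A B → L ∩ T.center ⊆ B →
      (A ∩ L).card ≤ q' (A ∩ B).card) :
    A.card ≤ q (A ∩ B).card +
      (2 ^ q (A ∩ B).card + (A ∩ B).card) * q' (q (A ∩ B).card + (A ∩ B).card) := by
  classical
  have hmemAB : ∀ v : V, v ∈ A ∨ v ∈ B := by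
    intro v
    have hv : v ∈ A ∪ B := by rw [hsep.1]; exact mem_univ v
    exact mem_union.mp hv
  -- a modified separation pushing A's center vertices to the B side
  have hsep2 : IsSep G A (B ∪ A ∩ T.center) := by
    refine ⟨?_, ?_⟩
    · apply Finset.eq_univ_iff_forall.mpr
      intro v
      rcases hmemAB v with h | h
      · exact mem_union_left _ h
      · exact mem_union_right _ (mem_union_left _ h)
    · intro a ha haB b hb hbA
      rcases mem_union.mp hb with hbB | hbAc
      · exact hsep.2 a ha (fun h => haB (mem_union_left _ h)) b hbB hbA
      · exact absurd (mem_inter.mp hbAc).1 hbA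
  have heq2 : A ∩ (B ∪ A ∩ T.center) = (A ∩ B) ∪ (A ∩ T.center) := by
    ext v
    simp only [mem_inter, mem_union]
    tauto
  have hord2 : (A ∩ (B ∪ A ∩ T.center)).card ≤ q (A ∩ B).card + (A ∩ B).card := by
    rw [heq2]
    have := card_union_le (A ∩ B) (A ∩ T.center)
    omega
  have hleafbound : ∀ L ∈ T.leaves,
      (A ∩ L).card ≤ q' (q (A ∩ B).card + (A ∩ B).card) := by
    intro L hL
    have hsub : L ∩ T.center ⊆ B ∪ A ∩ T.center := by
      intro v hv
      rcases hmemAB v with hA | hB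
      · exact mem_union_right _ (mem_inter.mpr ⟨hA, (mem_inter.mp hv).2⟩)
      · exact mem_union_left _ hB
    exact (hleaf L hL A _ hsep2 hsub).trans (hq' hord2)
  set F : Finset (Finset V) :=
    T.leaves.filter (fun L => (A ∩ (L \ T.center)).Nonempty) with hF
  set p : Finset V → Prop := fun L => ((L \ T.center) ∩ (A ∩ B)).Nonempty with hp
  set F₁ : Finset (Finset V) := F.filter p with hF₁
  set F₂ : Finset (Finset V) := F.filter (fun L => ¬ p L) with hF₂
  have hcardF : F₁.card + F₂.card = F.card :=
    Finset.card_filter_add_card_filter_not (p := p)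
  -- bound on the number of leaves whose interior meets the separator
  have hF1card : F₁.card ≤ (A ∩ B).card := by
    set g : V → Finset V := fun v =>
      if h : ∃ L ∈ F₁, v ∈ L \ T.center then h.choose else ∅ with hg
    have hsubimg : F₁ ⊆ (A ∩ B).image g := by
      intro L hLF1
      have hpL : ((L \ T.center) ∩ (A ∩ B)).Nonempty := (mem_filter.mp hLF1).2
      obtain ⟨v, hv⟩ := hpL
      rw [mem_inter] at hv
      refine mem_image.mpr ⟨v, hv.2, ?_⟩
      have hex : ∃ L' ∈ F₁, v ∈ L' \ T.center := ⟨L, hLF1, hv.1⟩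
      rw [hg]
      simp only [dif_pos hex]
      obtain ⟨hL'F1, hvL'⟩ := hex.choose_spec
      by_contra hne
      have hL : L ∈ T.leaves := (mem_filter.mp (mem_filter.mp hLF1).1).1
      have hL' : hex.choose ∈ T.leaves := (mem_filter.mp (mem_filter.mp hL'F1).1).1
      have := T.inter hex.choose hL' L hL hne v (mem_sdiff.mp hvL').1 (mem_sdiff.mp hv.1).1
      exact (mem_sdiff.mp hvL').2 this
    calc F₁.card ≤ ((A ∩ B).image g).card := card_le_card hsubimg
      _ ≤ (A ∩ B).card := card_image_le
  -- leaves whose interior avoids the separator have adhesion inside A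
  have hsubA : ∀ L ∈ F₂, L ∩ T.center ⊆ A ∩ T.center := by
    intro L hLF2 v hv
    have hLmem := mem_filter.mp hLF2
    have hLF := mem_filter.mp hLmem.1
    obtain ⟨x, hx⟩ := hLF.2
    rw [mem_inter] at hx
    have hempty : (L \ T.center) ∩ (A ∩ B) = ∅ :=
      not_nonempty_iff_eq_empty.mp hLmem.2
    have hxB : x ∉ B := by
      intro hxB
      have hxm : x ∈ (L \ T.center) ∩ (A ∩ B) :=
        mem_inter.mpr ⟨hx.2, mem_inter.mpr ⟨hx.1, hxB⟩⟩
      rw [hempty] at hxm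
      exact absurd hxm (notMem_empty x)
    have key : ∀ (x' y : V) (w : G.Walk x' y),
        (∀ u ∈ w.support, u ∈ (↑L \ ↑T.center : Set V)) → x' ∈ A → x' ∉ B →
        y ∈ A ∧ y ∉ B := by
      intro x' y w
      induction w with
      | nil => intro _ h1 h2; exact ⟨h1, h2⟩
      | cons hadj w ih =>
        rename_i a b c
        intro hsup haA haB
        have hbsup : b ∈ (SimpleGraph.Walk.cons hadj w).support := by
          rw [SimpleGraph.Walk.support_cons]
          exact List.mem_cons_of_mem _ w.start_mem_support
        have hbI : b ∈ (↑L \ ↑T.center : Set V) := hsup b hbsup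
        have hbIF : b ∈ L \ T.center :=
          mem_sdiff.mpr ⟨by exact_mod_cast hbI.1, fun h => hbI.2 (by exact_mod_cast h)⟩
        have hbA : b ∈ A := by
          by_contra hbA
          have hbB := (hmemAB b).resolve_left hbA
          exact hsep.2 a haA haB b hbB hbA hadj
        have hbB : b ∉ B := by
          intro hbB
          have hbm : b ∈ (L \ T.center) ∩ (A ∩ B) :=
            mem_inter.mpr ⟨hbIF, mem_inter.mpr ⟨hbA, hbB⟩⟩
          rw [hempty] at hbm
          exact absurd hbm (notMem_empty b)
        refine ih ?_ hbA hbB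
        intro u hu
        exact hsup u (by rw [SimpleGraph.Walk.support_cons]; exact List.mem_cons_of_mem _ hu)
    set C : Set V :=
      {y | ∃ w : G.Walk x y, ∀ u ∈ w.support, u ∈ (↑L \ ↑T.center : Set V)} with hC
    have hxS : x ∈ (↑L \ ↑T.center : Set V) := by
      have := mem_sdiff.mp hx.2
      exact ⟨by exact_mod_cast this.1, fun h => this.2 (by exact_mod_cast h)⟩
    have hcomp : IsCompWithin G (↑L \ ↑T.center) C := ⟨x, hxS, rfl⟩
    have hnb := T.comp_nbhd L hLF.1 C hcomp
    have hvnb : v ∈ nbhdSet G C := by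
      rw [hnb]
      exact_mod_cast hv
    obtain ⟨hvC, c, hcC, hadj⟩ := hvnb
    obtain ⟨w, hw⟩ := hcC
    have hc := key x c w hw hx.1 hxB
    refine mem_inter.mpr ⟨?_, (mem_inter.mp hv).2⟩
    by_contra hvA
    have hvB : v ∈ B := (hmemAB v).resolve_left hvA
    exact hsep.2 c hc.1 hc.2 v hvB hvA hadj.symm
  have hF2card : F₂.card ≤ 2 ^ q (A ∩ B).card := by
    have h1 : F₂.card ≤ ((A ∩ T.center).powerset).card := by
      apply Finset.card_le_card_of_injOn (fun L => L ∩ T.center)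
      · intro L hL
        exact mem_powerset.mpr (hsubA L hL)
      · intro L hL L' hL' h
        have hLl : L ∈ T.leaves := (mem_filter.mp (mem_filter.mp hL).1).1
        have hL'l : L' ∈ T.leaves := (mem_filter.mp (mem_filter.mp hL').1).1
        exact T.adh_distinct L hLl L' hL'l h
    rw [card_powerset] at h1
    exact h1.trans (Nat.pow_le_pow_right (by norm_num) hAc)
  have hAsub : A ⊆ (A ∩ T.center) ∪ F.biUnion (fun L => A ∩ (L \ T.center)) := by
    intro a ha
    by_cases hac : a ∈ T.center
    · exact mem_union_left _ (mem_inter.mpr ⟨ha, hac⟩)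
    · obtain ⟨L, hL, haL⟩ := (T.cover a).resolve_left hac
      have ham : a ∈ A ∩ (L \ T.center) :=
        mem_inter.mpr ⟨ha, mem_sdiff.mpr ⟨haL, hac⟩⟩
      refine mem_union_right _ (mem_biUnion.mpr ⟨L, ?_, ham⟩)
      exact mem_filter.mpr ⟨hL, ⟨a, ham⟩⟩
  have hsum : ∑ L ∈ F, (A ∩ (L \ T.center)).card ≤
      F.card * q' (q (A ∩ B).card + (A ∩ B).card) := by
    have := Finset.sum_le_card_nsmul F (fun L => (A ∩ (L \ T.center)).card)
      (q' (q (A ∩ B).card + (A ∩ B).card)) (fun L hL => by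
        have hLl : L ∈ T.leaves := (mem_filter.mp hL).1
        refine le_trans (card_le_card ?_) (hleafbound L hLl)
        intro u hu
        rw [mem_inter] at hu ⊢
        exact ⟨hu.1, (mem_sdiff.mp hu.2).1⟩)
    simpa [smul_eq_mul] using this
  calc A.card ≤ ((A ∩ T.center) ∪ F.biUnion (fun L => A ∩ (L \ T.center))).card :=
        card_le_card hAsub
    _ ≤ (A ∩ T.center).card + (F.biUnion (fun L => A ∩ (L \ T.center))).card :=
        card_union_le _ _
    _ ≤ (A ∩ T.center).card + ∑ L ∈ F, (A ∩ (L \ T.center)).card := by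
        have := Finset.card_biUnion_le (s := F) (t := fun L => A ∩ (L \ T.center))
        omega
    _ ≤ q (A ∩ B).card + F.card * q' (q (A ∩ B).card + (A ∩ B).card) :=
        add_le_add hAc hsum
    _ ≤ q (A ∩ B).card +
        (2 ^ q (A ∩ B).card + (A ∩ B).card) * q' (q (A ∩ B).card + (A ∩ B).card) := by
        have hFc : F.card ≤ 2 ^ q (A ∩ B).card + (A ∩ B).card := by omega
        exact Nat.add_le_add_left (Nat.mul_le_mul_right _ hFc) _

/-- if `G` has a connectivity-sensitive star decomposition whose central
bag is `q`-unbreakable and each leaf bag is `q'`-unbreakability-tied to its adhesion,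
then `V(G)` is `q*`-unbreakable with `q*(i) = q(i) + (2^{q(i)} + i)·q'(q(i) + i)`. -/
theorem star_decomp_unbreakable (G : SimpleGraph V) (k : ℕ) (q q' : ℕ → ℕ)
    (hq : Monotone q) (hq' : Monotone q') (T : ConnSensStar G)
    (hcenter : ∀ A B : Finset V, IsSep G A B → (A ∩ B).card ≤ k →
      (A ∩ T.center).card ≤ q (A ∩ B).card ∨ (B ∩ T.center).card ≤ q (A ∩ B).card)
    (hleaf : ∀ L ∈ T.leaves, ∀ A B : Finset V, IsSep G A B → L ∩ T.center ⊆ B →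
      (A ∩ L).card ≤ q' (A ∩ B).card) :
    ∀ A B : Finset V, IsSep G A B → (A ∩ B).card ≤ k →
      A.card ≤ q (A ∩ B).card +
        (2 ^ q (A ∩ B).card + (A ∩ B).card) * q' (q (A ∩ B).card + (A ∩ B).card) ∨
      B.card ≤ q (A ∩ B).card +
        (2 ^ q (A ∩ B).card + (A ∩ B).card) * q' (q (A ∩ B).card + (A ∩ B).card) := by
  intro A B hsep hord
  have hsep' : IsSep G B A := by
    refine ⟨by rw [union_comm]; exact hsep.1, ?_⟩
    intro b hb hbA a ha haB hadj
    exact hsep.2 a ha haB b hb hbA hadj.symm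
  rcases hcenter A B hsep hord with h | h
  · exact Or.inl (aux_star_side G q q' hq' T A B hsep h hleaf)
  · right
    have h' : (B ∩ T.center).card ≤ q (B ∩ A).card := by rwa [inter_comm B A]
    have h2 := aux_star_side G q q' hq' T B A hsep' h' hleaf
    rwa [inter_comm B A] at h2
end

section
/- Let k and s be positive integers, q : [k] → ℕ non-decreasing, G a graph, D ⊆ V(G), and (T,χ) a connectivity-sensitive star decomposition of G with central bag b such that χ(b) is q-unbreakability-tied to D and every leaf ℓ of T satisfies |χ(ℓ)| ≤ s. Then V(G) is q'-unbreakability-tied to D, where q'(i) = (2^{q(i)} + i)·s for all i ∈ [k]. -/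
open Finset

variable {V : Type*} [Fintype V] [DecidableEq V]

/-- if `G` has a connectivity-sensitive star decomposition whose central
bag is `q`-unbreakability-tied to `D` and whose leaf bags all have size at most `s`,
then `V(G)` is `q'`-unbreakability-tied to `D` with `q'(i) = (2^{q(i)} + i)·s`. -/
theorem star_decomp_tied (G : SimpleGraph V) (k s : ℕ) (hk : 0 < k) (hs : 0 < s)
    (q : ℕ → ℕ) (hq : Monotone q) (D : Finset V) (T : ConnSensStar G)
    (hcenter : ∀ L R : Finset V, IsSep G L R → (L ∩ R).card ≤ k → D ⊆ R →
      (L ∩ T.center).card ≤ q (L ∩ R).card)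
    (hleaf : ∀ L ∈ T.leaves, L.card ≤ s) :
    ∀ L R : Finset V, IsSep G L R → (L ∩ R).card ≤ k → D ⊆ R →
      L.card ≤ (2 ^ q (L ∩ R).card + (L ∩ R).card) * s := by
  classical
  intro L R hsep hord hD
  -- notation
  set i := (L ∩ R).card with hi
  set Q : Finset V := L ∩ T.center with hQdef
  have hQ : Q.card ≤ q i := hcenter L R hsep hord hD
  have hunion : ∀ u : V, u ∈ L ∨ u ∈ R := by
    intro u
    have := mem_univ u
    rw [← hsep.1] at this
    exact mem_union.mp this
  -- choose a leaf for each non-center vertex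
  have hcov : ∀ v : V, v ∉ T.center → ∃ ℓ, ℓ ∈ T.leaves ∧ v ∈ ℓ := by
    intro v hv
    rcases T.cover v with h | ⟨ℓ, hℓ, hvℓ⟩
    · exact absurd h hv
    · exact ⟨ℓ, hℓ, hvℓ⟩
  choose! F hF1 hF2 using hcov
  -- the component of v within its leaf's interior
  set Cset : V → Set V := fun v =>
    {y | ∃ p : G.Walk v y, ∀ u ∈ p.support, u ∈ (↑(F v) : Set V) \ ↑T.center} with hCdef
  have hCmem : ∀ v c, c ∈ Cset v → c ∈ F v ∧ c ∉ T.center := by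
    intro v c ⟨p, hp⟩
    have := hp c p.end_mem_support
    exact ⟨this.1, this.2⟩
  have hCself : ∀ v, v ∉ T.center → v ∈ Cset v := by
    intro v hv
    refine ⟨SimpleGraph.Walk.nil, ?_⟩
    intro u hu
    simp only [SimpleGraph.Walk.support_nil, List.mem_singleton] at hu
    rw [hu]
    exact ⟨hF2 v hv, hv⟩
  have hCsupp : ∀ v c (p : G.Walk v c),
      (∀ u ∈ p.support, u ∈ (↑(F v) : Set V) \ ↑T.center) →
      ∀ u ∈ p.support, u ∈ Cset v := by
    intro v c p hp u hu
    exact ⟨p.takeUntil u hu, fun w hw => hp w (p.support_takeUntil_subset hu hw)⟩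
  -- walk lemma
  have hwalkL : ∀ {x y : V} (p : G.Walk x y), x ∈ L →
      (∀ u ∈ p.support, u ∉ L ∩ R) → ∀ u ∈ p.support, u ∈ L := by
    intro x y p
    induction p with
    | nil =>
      intro hx _ u hu
      simp only [SimpleGraph.Walk.support_nil, List.mem_singleton] at hu
      subst hu; exact hx
    | @cons a b c hadj p ih =>
      intro hx hns u hu
      have hxR : a ∉ R := fun hR => hns a (SimpleGraph.Walk.start_mem_support _)
        (mem_inter.mpr ⟨hx, hR⟩)
      have hbL : b ∈ L := by
        by_contra hbL
        have hbR : b ∈ R := (hunion b).resolve_left hbL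
        exact hsep.2 a hx hxR b hbR hbL hadj
      rw [SimpleGraph.Walk.support_cons] at hu
      rcases List.mem_cons.mp hu with rfl | hu
      · exact hx
      · refine ih hbL ?_ u hu
        intro w hw
        apply hns w
        rw [SimpleGraph.Walk.support_cons]
        exact List.mem_cons_of_mem _ hw
  -- bad vertices: component meets the separator
  set bad : V → Prop := fun v => ∃ w, w ∈ L ∩ R ∧ w ∈ Cset v with hbaddef
  set B : Finset V := (L \ T.center).filter bad with hBdef
  set Good : Finset V := (L \ T.center).filter (fun v => ¬ bad v) with hGdef
  -- key claim: for good vertices, the leaf's adhesion is inside Q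
  have hgood : ∀ v ∈ Good, F v ∩ T.center ⊆ Q := by
    intro v hv
    rw [hGdef, mem_filter, mem_sdiff] at hv
    obtain ⟨⟨hvL, hvc⟩, hnb⟩ := hv
    have hcomp : IsCompWithin G ((↑(F v) : Set V) \ ↑T.center) (Cset v) :=
      ⟨v, ⟨hF2 v hvc, hvc⟩, rfl⟩
    have hnbhd := T.comp_nbhd (F v) (hF1 v hvc) (Cset v) hcomp
    -- the component is inside L \ R
    have hCL : ∀ c ∈ Cset v, c ∈ L ∧ c ∉ R := by
      rintro c ⟨p, hp⟩
      have hns : ∀ u ∈ p.support, u ∉ L ∩ R := by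
        intro u hu hmem
        exact hnb ⟨u, hmem, hCsupp v c p hp u hu⟩
      have hcL := hwalkL p hvL hns c p.end_mem_support
      exact ⟨hcL, fun hR => hns c p.end_mem_support (mem_inter.mpr ⟨hcL, hR⟩)⟩
    intro u hu
    have huN : u ∈ nbhdSet G (Cset v) := by
      rw [hnbhd]; exact hu
    obtain ⟨_, c, hc, hadj⟩ := huN
    obtain ⟨hcL, hcR⟩ := hCL c hc
    have huL : u ∈ L := by
      by_contra huL
      have huR : u ∈ R := (hunion u).resolve_left huL
      exact hsep.2 c hcL hcR u huR huL hadj.symm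
    exact mem_inter.mpr ⟨huL, (mem_inter.mp hu).2⟩
  -- the family of leaves with adhesion inside Q
  set Fam : Finset (Finset V) := T.leaves.filter (fun ℓ => ℓ ∩ T.center ⊆ Q) with hFamdef
  set m := Fam.card with hm
  -- counting Good
  have hGoodsub : Good ⊆ Fam.biUnion (fun ℓ => ℓ \ T.center) := by
    intro v hv
    have hv' := hv
    rw [hGdef, mem_filter, mem_sdiff] at hv'
    obtain ⟨⟨hvL, hvc⟩, _⟩ := hv'
    refine mem_biUnion.mpr ⟨F v, ?_, mem_sdiff.mpr ⟨hF2 v hvc, hvc⟩⟩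
    rw [hFamdef, mem_filter]
    exact ⟨hF1 v hvc, hgood v hv⟩
  have hGoodcard : Good.card ≤ ∑ ℓ ∈ Fam, (ℓ \ T.center).card :=
    le_trans (card_le_card hGoodsub) (card_biUnion_le)
  -- m ≤ 2 ^ Q.card
  have hFamleaves : ∀ ℓ ∈ Fam, ℓ ∈ T.leaves := fun ℓ hℓ => (mem_filter.mp hℓ).1
  have hminj : ∀ ℓ ∈ Fam, ∀ ℓ' ∈ Fam, ℓ ∩ T.center = ℓ' ∩ T.center → ℓ = ℓ' := by
    intro ℓ hℓ ℓ' hℓ' h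
    exact T.adh_distinct ℓ (hFamleaves ℓ hℓ) ℓ' (hFamleaves ℓ' hℓ') h
  have hmP : m ≤ 2 ^ Q.card := by
    have : m ≤ Q.powerset.card := by
      apply card_le_card_of_injOn (fun ℓ => ℓ ∩ T.center)
      · intro ℓ hℓ
        exact mem_powerset.mpr (mem_filter.mp hℓ).2
      · intro ℓ hℓ ℓ' hℓ' h
        exact hminj ℓ hℓ ℓ' hℓ' h
    rwa [card_powerset] at this
  have hmP' : m ≤ 2 ^ q i := le_trans hmP (Nat.pow_le_pow_right (by norm_num) hQ)
  -- sum of adhesion sizes ≥ m - 1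
  have hadh : m ≤ (∑ ℓ ∈ Fam, (ℓ ∩ T.center).card) + 1 := by
    have hsplit := card_filter_add_card_filter_not
      (s := Fam) (p := fun ℓ => ℓ ∩ T.center = ∅)
    have hone : (Fam.filter (fun ℓ => ℓ ∩ T.center = ∅)).card ≤ 1 := by
      apply card_le_one.mpr
      intro a ha b hb
      rw [mem_filter] at ha hb
      exact hminj a ha.1 b hb.1 (ha.2.trans hb.2.symm)
    have hpos : (Fam.filter (fun ℓ => ¬ (ℓ ∩ T.center = ∅))).card ≤
        ∑ ℓ ∈ Fam, (ℓ ∩ T.center).card := by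
      calc (Fam.filter (fun ℓ => ¬ (ℓ ∩ T.center = ∅))).card
          = ∑ ℓ ∈ Fam.filter (fun ℓ => ¬ (ℓ ∩ T.center = ∅)), 1 := by
            rw [card_eq_sum_ones]
        _ ≤ ∑ ℓ ∈ Fam.filter (fun ℓ => ¬ (ℓ ∩ T.center = ∅)), (ℓ ∩ T.center).card := by
            apply sum_le_sum
            intro ℓ hℓ
            exact card_pos.mpr (nonempty_iff_ne_empty.mpr (mem_filter.mp hℓ).2)
        _ ≤ ∑ ℓ ∈ Fam, (ℓ ∩ T.center).card :=
            sum_le_sum_of_subset (filter_subset _ _)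
    omega
  -- per-leaf size bound
  have hsum : (∑ ℓ ∈ Fam, (ℓ \ T.center).card) + (∑ ℓ ∈ Fam, (ℓ ∩ T.center).card)
      ≤ m * s := by
    rw [← sum_add_distrib]
    calc ∑ ℓ ∈ Fam, ((ℓ \ T.center).card + (ℓ ∩ T.center).card)
        ≤ ∑ _ℓ ∈ Fam, s := by
          apply sum_le_sum
          intro ℓ hℓ
          have : (ℓ ∩ T.center).card + (ℓ \ T.center).card = ℓ.card :=
            card_inter_add_card_sdiff ℓ T.center
          have := hleaf ℓ (hFamleaves ℓ hℓ)
          omega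
      _ = m * s := by rw [sum_const, smul_eq_mul]
  -- combinatorial bound : Q.card + Good.card ≤ 2^{q i} * s
  have hcomb : Q.card + Good.card ≤ 2 ^ q i * s := by
    set P := 2 ^ q i with hP
    have hqP : q i < P := Nat.lt_two_pow_self
    have hzm : P - m + m = P := Nat.sub_add_cancel hmP'
    have hsplit : (P - m) * s + m * s = P * s := by
      rw [← add_mul, hzm]
    have hz : P - m ≤ (P - m) * s := Nat.le_mul_of_pos_right _ hs
    set Sc := ∑ ℓ ∈ Fam, (ℓ \ T.center).card with hSc
    set Sa := ∑ ℓ ∈ Fam, (ℓ ∩ T.center).card with hSa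
    have h1 : Good.card ≤ Sc := hGoodcard
    -- linear arithmetic over atoms
    have key : Q.card + Sc ≤ P * s := by
      have e1 : Sc + Sa ≤ m * s := hsum
      have e2 : m ≤ Sa + 1 := hadh
      zify at *
      nlinarith [hz, hsplit, hzm, hQ, hqP, e1, e2]
    omega
  -- bad vertices : at most i * s
  have hgex : ∀ v : V, ∃ w : V, bad v → w ∈ L ∩ R ∧ w ∈ Cset v := by
    intro v
    by_cases h : bad v
    · obtain ⟨w, hw⟩ := h
      exact ⟨w, fun _ => hw⟩
    · exact ⟨v, fun hb => absurd hb h⟩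
  choose g hg using hgex
  have hBcard : B.card ≤ s * i := by
    have himg : (B.image g).card ≤ i := by
      rw [hi]
      apply card_le_card
      intro w hw
      obtain ⟨v, hv, rfl⟩ := mem_image.mp hw
      exact (hg v ((mem_filter.mp hv).2)).1
    have hfib : ∀ w ∈ B.image g, (B.filter (fun v => g v = w)).card ≤ s := by
      intro w hw
      obtain ⟨v0, hv0, hv0w⟩ := mem_image.mp hw
      have hv0bad : bad v0 := (mem_filter.mp hv0).2
      have hv0c : v0 ∉ T.center := (mem_sdiff.mp (mem_filter.mp hv0).1).2
      have : B.filter (fun v => g v = w) ⊆ F v0 := by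
        intro v hv
        rw [mem_filter] at hv
        obtain ⟨hvB, hgv⟩ := hv
        have hvbad : bad v := (mem_filter.mp hvB).2
        have hvc : v ∉ T.center := (mem_sdiff.mp (mem_filter.mp hvB).1).2
        have hwv : w ∈ Cset v := hgv ▸ (hg v hvbad).2
        have hwv0 : w ∈ Cset v0 := hv0w ▸ (hg v0 hv0bad).2
        have hFeq : F v = F v0 := by
          by_contra hne
          have h1 := hCmem v w hwv
          have h2 := hCmem v0 w hwv0
          exact h1.2 (T.inter (F v) (hF1 v hvc) (F v0) (hF1 v0 hv0c) hne w h1.1 h2.1)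
        rw [← hFeq]
        exact hF2 v hvc
      exact le_trans (card_le_card this) (hleaf (F v0) (hF1 v0 hv0c))
    calc B.card ≤ s * (B.image g).card := card_le_mul_card_image B s hfib
      _ ≤ s * i := Nat.mul_le_mul_left s himg
  -- put everything together
  have hLc : Q.card + (L \ T.center).card = L.card := card_inter_add_card_sdiff L T.center
  have hBG : B.card + Good.card = (L \ T.center).card :=
    card_filter_add_card_filter_not (s := L \ T.center) (p := bad)
  have hfinal : (2 ^ q i + i) * s = 2 ^ q i * s + i * s := add_mul _ _ _
  have hsi : s * i = i * s := Nat.mul_comm s i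
  omega
end

section
/- Let Λ be a finite label set and (G,ι), (G₁,ι₁), (G₂,ι₂) be Λ-boundaried graphs such that (G₁,ι₁) and (G₂,ι₂) have the same weak cut signature. Then for every vertex set S ⊆ V(G) and nonnegative integers q, r: S is (q,r)-unbreakable in (G,ι) ⊕ (G₁,ι₁) if and only if S is (q,r)-unbreakable in (G,ι) ⊕ (G₂,ι₂). -/
open Finset

variable {V : Type*} [Fintype V] [DecidableEq V]

/-- If `H₁` and `H₂` have the same weak cut signature, any label assigned in `H₂` is
assigned in `H₁`. -/
lemma SameWeakSig.dom_sub {Λ : Type*} [Fintype Λ] [DecidableEq Λ] {V₁ V₂ : Type*}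
    [Fintype V₁] [DecidableEq V₁] [Fintype V₂] [DecidableEq V₂]
    {H₁ : BGraph Λ V₁} {H₂ : BGraph Λ V₂} (hsig : SameWeakSig H₁ H₂)
    (l : Λ) (v : V₂) (hv : H₂.bd l = some v) : ∃ b, H₁.bd l = some b := by
  by_contra hc
  push_neg at hc
  have h1 : WeakSigLE H₁ {l} Finset.univ 0 := by
    refine ⟨∅, Finset.univ, ⟨by simp, by simp⟩, ?_, by simp, by simp⟩
    intro l' hl' v' hv'
    simp only [Finset.mem_singleton] at hl'
    subst hl'
    exact absurd hv' (hc v')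
  obtain ⟨A, B, _, hA, hB, hcard⟩ := (hsig {l} Finset.univ (by simp) 0).mp h1
  have hvAB : v ∈ A ∩ B :=
    Finset.mem_inter.mpr ⟨hA l (by simp) v hv, hB l (Finset.mem_univ l) v hv⟩
  have := Finset.card_pos.mpr ⟨v, hvAB⟩
  omega

/-- Key transfer lemma: one direction of the main theorem. -/
lemma key_transfer {Λ : Type*} [Fintype Λ] [DecidableEq Λ]
    {V₀ V₁ V₂ W₁ W₂ : Type*} [Fintype V₀] [DecidableEq V₀] [Fintype V₁] [DecidableEq V₁]
    [Fintype V₂] [DecidableEq V₂] [Fintype W₁] [DecidableEq W₁]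
    [Fintype W₂] [DecidableEq W₂]
    (H : BGraph Λ V₀) (H₁ : BGraph Λ V₁) (H₂ : BGraph Λ V₂)
    (hsig : SameWeakSig H₁ H₂)
    (K₁ : SimpleGraph W₁) (f₁ : V₀ → W₁) (g₁ : V₁ → W₁) (hK₁ : IsGluing H H₁ K₁ f₁ g₁)
    (K₂ : SimpleGraph W₂) (f₂ : V₀ → W₂) (g₂ : V₂ → W₂) (hK₂ : IsGluing H H₂ K₂ f₂ g₂)
    (S : Finset V₀) (q r : ℕ)
    (hU : UnbreakableSet K₁ (S.image f₁) q r) :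
    UnbreakableSet K₂ (S.image f₂) q r := by
  classical
  obtain ⟨hf₁inj, hg₁inj, hcov₁, hid₁, hadj₁⟩ := hK₁
  obtain ⟨hf₂inj, hg₂inj, hcov₂, hid₂, hadj₂⟩ := hK₂
  intro A₂ B₂ hsep₂ hord₂
  -- every vertex of K₂ is in A₂ or B₂
  have hcov2 : ∀ w : W₂, w ∈ A₂ ∨ w ∈ B₂ := by
    intro w
    have hw := Finset.mem_univ w
    rw [← hsep₂.1] at hw
    exact Finset.mem_union.mp hw
  -- restrictions to V₀ and V₂
  set A₀ : Finset V₀ := Finset.univ.filter (fun a => f₂ a ∈ A₂) with hA₀def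
  set B₀ : Finset V₀ := Finset.univ.filter (fun a => f₂ a ∈ B₂) with hB₀def
  set A₂' : Finset V₂ := Finset.univ.filter (fun v => g₂ v ∈ A₂) with hA₂'def
  set B₂' : Finset V₂ := Finset.univ.filter (fun v => g₂ v ∈ B₂) with hB₂'def
  have hmemA₀ : ∀ a, a ∈ A₀ ↔ f₂ a ∈ A₂ := fun a => by simp [hA₀def]
  have hmemB₀ : ∀ a, a ∈ B₀ ↔ f₂ a ∈ B₂ := fun a => by simp [hB₀def]
  have hmemA₂' : ∀ v, v ∈ A₂' ↔ g₂ v ∈ A₂ := fun v => by simp [hA₂'def]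
  have hmemB₂' : ∀ v, v ∈ B₂' ↔ g₂ v ∈ B₂ := fun v => by simp [hB₂'def]
  -- label sets
  set Ah : Finset Λ := Finset.univ.filter
    (fun l => (∀ a, H.bd l = some a → f₂ a ∈ A₂) ∧ (∀ v, H₂.bd l = some v → g₂ v ∈ A₂))
    with hAhdef
  set Bh : Finset Λ := Finset.univ.filter
    (fun l => (∀ a, H.bd l = some a → f₂ a ∈ B₂) ∧ (∀ v, H₂.bd l = some v → g₂ v ∈ B₂))
    with hBhdef
  have hmemAh : ∀ l, l ∈ Ah ↔
      ((∀ a, H.bd l = some a → f₂ a ∈ A₂) ∧ (∀ v, H₂.bd l = some v → g₂ v ∈ A₂)) :=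
    fun l => by simp [hAhdef]
  have hmemBh : ∀ l, l ∈ Bh ↔
      ((∀ a, H.bd l = some a → f₂ a ∈ B₂) ∧ (∀ v, H₂.bd l = some v → g₂ v ∈ B₂)) :=
    fun l => by simp [hBhdef]
  -- consistency of labelled vertices
  have hcons : ∀ l a v, H.bd l = some a → H₂.bd l = some v → f₂ a = g₂ v :=
    fun l a v h1 h2 => (hid₂ a v).mpr ⟨l, h1, h2⟩
  have hAhBh : Ah ∪ Bh = Finset.univ := by
    apply Finset.eq_univ_of_forall
    intro l
    rw [Finset.mem_union, hmemAh, hmemBh]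
    rcases h0 : H.bd l with _ | a
    · rcases h2 : H₂.bd l with _ | v
      · exact Or.inl ⟨fun a ha => by simp [h0] at ha, fun v hv => by simp [h2] at hv⟩
      · rcases hcov2 (g₂ v) with h | h
        · exact Or.inl ⟨fun a ha => by simp [h0] at ha,
            fun v' hv' => Option.some.inj hv' ▸ h⟩
        · exact Or.inr ⟨fun a ha => by simp [h0] at ha,
            fun v' hv' => Option.some.inj hv' ▸ h⟩
    · rcases hcov2 (f₂ a) with h | h
      · refine Or.inl ⟨fun a' ha' => Option.some.inj ha' ▸ h,
          fun v hv => ?_⟩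
        rw [← hcons l a v h0 hv]; exact h
      · refine Or.inr ⟨fun a' ha' => Option.some.inj ha' ▸ h,
          fun v hv => ?_⟩
        rw [← hcons l a v h0 hv]; exact h
  -- (A₂', B₂') is a separation of H₂ witnessing the signature value
  have hsig2 : WeakSigLE H₂ Ah Bh ((A₂' ∩ B₂').card) := by
    refine ⟨A₂', B₂', ⟨?_, ?_⟩, ?_, ?_, le_refl _⟩
    · apply Finset.eq_univ_of_forall
      intro v
      rw [Finset.mem_union, hmemA₂', hmemB₂']
      exact hcov2 (g₂ v)
    · intro a ha ha' b hb hb' hadj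
      rw [hmemA₂'] at ha
      rw [hmemB₂'] at hb
      rw [hmemB₂'] at ha'
      rw [hmemA₂'] at hb'
      exact hsep₂.2 (g₂ a) ha ha' (g₂ b) hb hb'
        ((hadj₂ (g₂ a) (g₂ b)).mpr (Or.inr ⟨a, b, rfl, rfl, hadj⟩))
    · intro l hl v hv
      rw [hmemA₂']
      exact ((hmemAh l).mp hl).2 v hv
    · intro l hl v hv
      rw [hmemB₂']
      exact ((hmemBh l).mp hl).2 v hv
  obtain ⟨A₁', B₁', hsep₁', hlabA, hlabB, hord₁'⟩ := (hsig Ah Bh hAhBh _).mpr hsig2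
  have hcov1' : ∀ b : V₁, b ∈ A₁' ∨ b ∈ B₁' := by
    intro b
    have hb := Finset.mem_univ b
    rw [← hsep₁'.1] at hb
    exact Finset.mem_union.mp hb
  -- transfer across shared boundary vertices
  have hT1A : ∀ a b, f₁ a = g₁ b → f₂ a ∈ A₂ → b ∈ A₁' := by
    intro a b hab ha
    obtain ⟨l, hla, hlb⟩ := (hid₁ a b).mp hab
    have hlAh : l ∈ Ah := by
      rw [hmemAh]
      refine ⟨fun a' ha' => Option.some.inj (hla.symm.trans ha') ▸ ha, fun v hv => ?_⟩
      rw [← hcons l a v hla hv]; exact ha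
    exact hlabA l hlAh b hlb
  have hT1B : ∀ a b, f₁ a = g₁ b → f₂ a ∈ B₂ → b ∈ B₁' := by
    intro a b hab ha
    obtain ⟨l, hla, hlb⟩ := (hid₁ a b).mp hab
    have hlBh : l ∈ Bh := by
      rw [hmemBh]
      refine ⟨fun a' ha' => Option.some.inj (hla.symm.trans ha') ▸ ha, fun v hv => ?_⟩
      rw [← hcons l a v hla hv]; exact ha
    exact hlabB l hlBh b hlb
  -- the glued separation of K₁
  set A₁ : Finset W₁ := A₀.image f₁ ∪ A₁'.image g₁ with hA₁def
  set B₁ : Finset W₁ := B₀.image f₁ ∪ B₁'.image g₁ with hB₁def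
  have hmemA₁ : ∀ x, x ∈ A₁ ↔ (∃ a ∈ A₀, f₁ a = x) ∨ (∃ b ∈ A₁', g₁ b = x) := by
    intro x; simp [hA₁def, Finset.mem_union, Finset.mem_image]
  have hmemB₁ : ∀ x, x ∈ B₁ ↔ (∃ a ∈ B₀, f₁ a = x) ∨ (∃ b ∈ B₁', g₁ b = x) := by
    intro x; simp [hB₁def, Finset.mem_union, Finset.mem_image]
  -- strict-side characterisations
  have hstrictA : ∀ x, x ∈ A₁ → x ∉ B₁ →
      (∀ a, f₁ a = x → a ∈ A₀ ∧ a ∉ B₀) ∧ (∀ b, g₁ b = x → b ∈ A₁' ∧ b ∉ B₁') := by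
    intro x hxA hxB
    constructor
    · intro a hax
      have haB : a ∉ B₀ := fun h => hxB ((hmemB₁ x).mpr (Or.inl ⟨a, h, hax⟩))
      have : f₂ a ∈ A₂ ∨ f₂ a ∈ B₂ := hcov2 (f₂ a)
      rcases this with h | h
      · exact ⟨(hmemA₀ a).mpr h, haB⟩
      · exact absurd ((hmemB₀ a).mpr h) haB
    · intro b hbx
      have hbB : b ∉ B₁' := fun h => hxB ((hmemB₁ x).mpr (Or.inr ⟨b, h, hbx⟩))
      rcases (hmemA₁ x).mp hxA with ⟨a, ha, hax⟩ | ⟨b', hb', hbx'⟩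
      · exact ⟨hT1A a b (hax.trans hbx.symm) ((hmemA₀ a).mp ha), hbB⟩
      · have : b' = b := hg₁inj (hbx'.trans hbx.symm)
        exact ⟨this ▸ hb', hbB⟩
  have hstrictB : ∀ x, x ∈ B₁ → x ∉ A₁ →
      (∀ a, f₁ a = x → a ∈ B₀ ∧ a ∉ A₀) ∧ (∀ b, g₁ b = x → b ∈ B₁' ∧ b ∉ A₁') := by
    intro x hxB hxA
    constructor
    · intro a hax
      have haA : a ∉ A₀ := fun h => hxA ((hmemA₁ x).mpr (Or.inl ⟨a, h, hax⟩))
      rcases hcov2 (f₂ a) with h | h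
      · exact absurd ((hmemA₀ a).mpr h) haA
      · exact ⟨(hmemB₀ a).mpr h, haA⟩
    · intro b hbx
      have hbA : b ∉ A₁' := fun h => hxA ((hmemA₁ x).mpr (Or.inr ⟨b, h, hbx⟩))
      rcases (hmemB₁ x).mp hxB with ⟨a, ha, hax⟩ | ⟨b', hb', hbx'⟩
      · exact ⟨hT1B a b (hax.trans hbx.symm) ((hmemB₀ a).mp ha), hbA⟩
      · have : b' = b := hg₁inj (hbx'.trans hbx.symm)
        exact ⟨this ▸ hb', hbA⟩
  -- (A₁, B₁) is a separation of K₁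
  have hsep₁ : IsSep K₁ A₁ B₁ := by
    constructor
    · apply Finset.eq_univ_of_forall
      intro w
      rw [Finset.mem_union, hmemA₁ w, hmemB₁ w]
      rcases hcov₁ w with ⟨a, ha⟩ | ⟨b, hb⟩
      · rcases hcov2 (f₂ a) with h | h
        · exact Or.inl (Or.inl ⟨a, (hmemA₀ a).mpr h, ha⟩)
        · exact Or.inr (Or.inl ⟨a, (hmemB₀ a).mpr h, ha⟩)
      · rcases hcov1' b with h | h
        · exact Or.inl (Or.inr ⟨b, h, hb⟩)
        · exact Or.inr (Or.inr ⟨b, h, hb⟩)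
    · intro x hxA hxB y hyB hyA hadj
      rcases (hadj₁ x y).mp hadj with ⟨a, a', hax, hay, hHadj⟩ | ⟨b, b', hbx, hby, hH1adj⟩
      · obtain ⟨haA, haB⟩ := (hstrictA x hxA hxB).1 a hax
        obtain ⟨ha'B, ha'A⟩ := (hstrictB y hyB hyA).1 a' hay
        exact hsep₂.2 (f₂ a) ((hmemA₀ a).mp haA) (fun h => haB ((hmemB₀ a).mpr h))
          (f₂ a') ((hmemB₀ a').mp ha'B) (fun h => ha'A ((hmemA₀ a').mpr h))
          ((hadj₂ (f₂ a) (f₂ a')).mpr (Or.inl ⟨a, a', rfl, rfl, hHadj⟩))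
      · obtain ⟨hbA, hbB⟩ := (hstrictA x hxA hxB).2 b hbx
        obtain ⟨hb'B, hb'A⟩ := (hstrictB y hyB hyA).2 b' hby
        exact hsep₁'.2 b hbA hbB b' hb'B hb'A hH1adj
  -- order bound
  set D₀ : Finset V₀ := A₀ ∩ B₀ with hD₀def
  set D₁ : Finset V₁ := A₁' ∩ B₁' with hD₁def
  set D₂ : Finset V₂ := A₂' ∩ B₂' with hD₂def
  set E : Finset V₀ := D₀.filter (fun a => ∃ v ∈ D₂, g₂ v = f₂ a) with hEdef
  -- C1 : the separator of K₁ is covered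
  have hC1 : A₁ ∩ B₁ ⊆ D₀.image f₁ ∪ D₁.image g₁ := by
    intro w hw
    obtain ⟨hwA, hwB⟩ := Finset.mem_inter.mp hw
    rw [Finset.mem_union, Finset.mem_image, Finset.mem_image]
    rcases (hmemA₁ w).mp hwA with ⟨a, ha, hax⟩ | ⟨b, hb, hbx⟩
    · rcases (hmemB₁ w).mp hwB with ⟨a', ha', hax'⟩ | ⟨b', hb', hbx'⟩
      · have : a = a' := hf₁inj (hax.trans hax'.symm)
        exact Or.inl ⟨a, Finset.mem_inter.mpr ⟨ha, this ▸ ha'⟩, hax⟩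
      · have hb'A : b' ∈ A₁' := hT1A a b' (hax.trans hbx'.symm) ((hmemA₀ a).mp ha)
        exact Or.inr ⟨b', Finset.mem_inter.mpr ⟨hb'A, hb'⟩, hbx'⟩
    · rcases (hmemB₁ w).mp hwB with ⟨a', ha', hax'⟩ | ⟨b', hb', hbx'⟩
      · have hbB : b ∈ B₁' := hT1B a' b (hax'.trans hbx.symm) ((hmemB₀ a').mp ha')
        exact Or.inr ⟨b, Finset.mem_inter.mpr ⟨hb, hbB⟩, hbx⟩
      · have : b = b' := hg₁inj (hbx.trans hbx'.symm)
        exact Or.inr ⟨b, Finset.mem_inter.mpr ⟨hb, this ▸ hb'⟩, hbx⟩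
  -- C2 : the overlap in K₂ injects into the overlap in K₁
  have hC2 : E.image f₁ ⊆ (D₀.image f₁) ∩ (D₁.image g₁) := by
    intro w hw
    rw [Finset.mem_image] at hw
    obtain ⟨a, ha, haw⟩ := hw
    rw [hEdef, Finset.mem_filter] at ha
    obtain ⟨haD₀, v, hvD₂, hgv⟩ := ha
    rw [Finset.mem_inter, Finset.mem_image, Finset.mem_image]
    refine ⟨⟨a, haD₀, haw⟩, ?_⟩
    obtain ⟨l, hla, hlv⟩ := (hid₂ a v).mp hgv.symm
    obtain ⟨b, hlb⟩ := hsig.dom_sub l v hlv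
    have hab : f₁ a = g₁ b := (hid₁ a b).mpr ⟨l, hla, hlb⟩
    obtain ⟨haA₀, haB₀⟩ := Finset.mem_inter.mp haD₀
    refine ⟨b, Finset.mem_inter.mpr
      ⟨hT1A a b hab ((hmemA₀ a).mp haA₀), hT1B a b hab ((hmemB₀ a).mp haB₀)⟩,
      hab ▸ haw⟩
  -- C3 : both separators embed in the separator of K₂
  have hC3 : D₀.image f₂ ∪ D₂.image g₂ ⊆ A₂ ∩ B₂ := by
    intro w hw
    rw [Finset.mem_union, Finset.mem_image, Finset.mem_image] at hw
    rcases hw with ⟨a, ha, haw⟩ | ⟨v, hv, hvw⟩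
    · obtain ⟨h1, h2⟩ := Finset.mem_inter.mp ha
      exact haw ▸ Finset.mem_inter.mpr ⟨(hmemA₀ a).mp h1, (hmemB₀ a).mp h2⟩
    · obtain ⟨h1, h2⟩ := Finset.mem_inter.mp hv
      exact hvw ▸ Finset.mem_inter.mpr ⟨(hmemA₂' v).mp h1, (hmemB₂' v).mp h2⟩
  -- C4 : overlap in K₂ is contained in the image of E
  have hC4 : (D₀.image f₂) ∩ (D₂.image g₂) ⊆ E.image f₂ := by
    intro w hw
    obtain ⟨hw1, hw2⟩ := Finset.mem_inter.mp hw
    rw [Finset.mem_image] at hw1 hw2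
    obtain ⟨a, ha, haw⟩ := hw1
    obtain ⟨v, hv, hvw⟩ := hw2
    rw [Finset.mem_image]
    exact ⟨a, by rw [hEdef, Finset.mem_filter]; exact ⟨ha, v, hv, hvw.trans haw.symm⟩, haw⟩
  -- cardinality bookkeeping
  have hcard1 : (D₀.image f₁ ∪ D₁.image g₁).card + (D₀.image f₁ ∩ D₁.image g₁).card
      = D₀.card + D₁.card := by
    rw [Finset.card_union_add_card_inter, Finset.card_image_of_injective _ hf₁inj,
      Finset.card_image_of_injective _ hg₁inj]
  have hcard2 : (D₀.image f₂ ∪ D₂.image g₂).card + (D₀.image f₂ ∩ D₂.image g₂).card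
      = D₀.card + D₂.card := by
    rw [Finset.card_union_add_card_inter, Finset.card_image_of_injective _ hf₂inj,
      Finset.card_image_of_injective _ hg₂inj]
  have hEcard1 : (E.image f₁).card = E.card := Finset.card_image_of_injective _ hf₁inj
  have hEcard2 : (E.image f₂).card = E.card := Finset.card_image_of_injective _ hf₂inj
  have h1 := Finset.card_le_card hC1
  have h2 := Finset.card_le_card hC2
  have h3 := Finset.card_le_card hC3
  have h4 := Finset.card_le_card hC4
  have hord₁ : (A₁ ∩ B₁).card ≤ r := by omega
  -- apply unbreakability in K₁
  have hSA : (A₂ ∩ S.image f₂).card ≤ (A₁ ∩ S.image f₁).card := by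
    have he : A₂ ∩ S.image f₂ = (A₀ ∩ S).image f₂ := by
      ext w
      simp only [Finset.mem_inter, Finset.mem_image]
      constructor
      · rintro ⟨hw, s, hs, rfl⟩
        exact ⟨s, ⟨(hmemA₀ s).mpr hw, hs⟩, rfl⟩
      · rintro ⟨s, hs, rfl⟩
        obtain ⟨h1, h2⟩ := hs
        exact ⟨(hmemA₀ s).mp h1, s, h2, rfl⟩
    have hsub : (A₀ ∩ S).image f₁ ⊆ A₁ ∩ S.image f₁ := by
      intro w hw
      rw [Finset.mem_image] at hw
      obtain ⟨s, hs, hsw⟩ := hw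
      obtain ⟨h1, h2⟩ := Finset.mem_inter.mp hs
      refine Finset.mem_inter.mpr ⟨(hmemA₁ w).mpr (Or.inl ⟨s, h1, hsw⟩), ?_⟩
      rw [Finset.mem_image]; exact ⟨s, h2, hsw⟩
    calc (A₂ ∩ S.image f₂).card = ((A₀ ∩ S).image f₂).card := by rw [he]
      _ = (A₀ ∩ S).card := Finset.card_image_of_injective _ hf₂inj
      _ = ((A₀ ∩ S).image f₁).card := (Finset.card_image_of_injective _ hf₁inj).symm
      _ ≤ (A₁ ∩ S.image f₁).card := Finset.card_le_card hsub
  have hSB : (B₂ ∩ S.image f₂).card ≤ (B₁ ∩ S.image f₁).card := by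
    have he : B₂ ∩ S.image f₂ = (B₀ ∩ S).image f₂ := by
      ext w
      simp only [Finset.mem_inter, Finset.mem_image]
      constructor
      · rintro ⟨hw, s, hs, rfl⟩
        exact ⟨s, ⟨(hmemB₀ s).mpr hw, hs⟩, rfl⟩
      · rintro ⟨s, hs, rfl⟩
        obtain ⟨h1, h2⟩ := hs
        exact ⟨(hmemB₀ s).mp h1, s, h2, rfl⟩
    have hsub : (B₀ ∩ S).image f₁ ⊆ B₁ ∩ S.image f₁ := by
      intro w hw
      rw [Finset.mem_image] at hw
      obtain ⟨s, hs, hsw⟩ := hw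
      obtain ⟨h1, h2⟩ := Finset.mem_inter.mp hs
      refine Finset.mem_inter.mpr ⟨(hmemB₁ w).mpr (Or.inl ⟨s, h1, hsw⟩), ?_⟩
      rw [Finset.mem_image]; exact ⟨s, h2, hsw⟩
    calc (B₂ ∩ S.image f₂).card = ((B₀ ∩ S).image f₂).card := by rw [he]
      _ = (B₀ ∩ S).card := Finset.card_image_of_injective _ hf₂inj
      _ = ((B₀ ∩ S).image f₁).card := (Finset.card_image_of_injective _ hf₁inj).symm
      _ ≤ (B₁ ∩ S.image f₁).card := Finset.card_le_card hsub
  rcases hU A₁ B₁ hsep₁ hord₁ with h | h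
  · exact Or.inl (le_trans hSA h)
  · exact Or.inr (le_trans hSB h)

/-- if `(G₁,ι₁)` and `(G₂,ι₂)` have the same weak cut signature, then for
every `S ⊆ V(G)` and `q, r`, the set `S` is `(q,r)`-unbreakable in `(G,ι) ⊕ (G₁,ι₁)` iff
it is `(q,r)`-unbreakable in `(G,ι) ⊕ (G₂,ι₂)`. -/
theorem same_weak_sig_same_unbreakable {Λ : Type*} [Fintype Λ] [DecidableEq Λ]
    {V₀ V₁ V₂ W₁ W₂ : Type*} [Fintype V₀] [DecidableEq V₀] [Fintype V₁] [DecidableEq V₁]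
    [Fintype V₂] [DecidableEq V₂] [Fintype W₁] [DecidableEq W₁]
    [Fintype W₂] [DecidableEq W₂]
    (H : BGraph Λ V₀) (H₁ : BGraph Λ V₁) (H₂ : BGraph Λ V₂)
    (hsig : SameWeakSig H₁ H₂)
    (K₁ : SimpleGraph W₁) (f₁ : V₀ → W₁) (g₁ : V₁ → W₁) (hK₁ : IsGluing H H₁ K₁ f₁ g₁)
    (K₂ : SimpleGraph W₂) (f₂ : V₀ → W₂) (g₂ : V₂ → W₂) (hK₂ : IsGluing H H₂ K₂ f₂ g₂)
    (S : Finset V₀) (q r : ℕ) :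
    UnbreakableSet K₁ (S.image f₁) q r ↔ UnbreakableSet K₂ (S.image f₂) q r := by
  constructor
  · exact fun h => key_transfer H H₁ H₂ hsig K₁ f₁ g₁ hK₁ K₂ f₂ g₂ hK₂ S q r h
  · exact fun h => key_transfer H H₂ H₁ (fun A' B' hc n => (hsig A' B' hc n).symm)
      K₂ f₂ g₂ hK₂ K₁ f₁ g₁ hK₁ S q r h
end
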